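/- Let Λ be a countable discrete group, Λ₀ ≤ Λ a subgroup, and θ : Λ₀ → Λ an injective group homomorphism. Let Γ = HNN(Λ, Λ₀, θ) be the corresponding HNN extension, i.e., Γ is generated by Λ together with a stable letter t subject to the relations t⁻¹ g t = θ(g) for all g ∈ Λ₀, and the canonical homomorphism Λ → Γ is injective. If both Λ₀ and θ(Λ₀) have infinite index in Λ, then the image of Λ in Γ is singular in Γ. -/

import Mathlib

/-- A witness that `Λ` is a singular subgroup of `Γ`: a nonempty compact Hausdorff space `X`
with a continuous action of `Γ` by homeomorphisms such that for every `Λ`-invariant regular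
Borel probability measure `μ` on `X` and every `g ∉ Λ`, the push-forward `g · μ` and `μ` are
mutually singular. -/
structure SingularityWitness {Γ : Type*} [Group Γ] (Λ : Subgroup Γ) where
  /-- The compact `Γ`-space. -/
  X : Type
  [ts : TopologicalSpace X]
  [ms : MeasurableSpace X]
  [bs : BorelSpace X]
  [cs : CompactSpace X]
  [t2 : T2Space X]
  [ne : Nonempty X]
  /-- The action of `Γ` on `X` by homeomorphisms. -/
  ρ : Γ → X ≃ₜ X
  ρ_one : ρ 1 = Homeomorph.refl X
  ρ_mul : ∀ g h : Γ, ρ (g * h) = (ρ h).trans (ρ g)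
  singular : ∀ μ : MeasureTheory.Measure X, MeasureTheory.IsProbabilityMeasure μ →
    μ.Regular → (∀ t ∈ Λ, μ.map (ρ t) = μ) →
    ∀ g ∉ Λ, (μ.map (ρ g)).MutuallySingular μ

/-- `Λ` is a singular subgroup of `Γ`. -/
def IsSingularIn {Γ : Type*} [Group Γ] (Λ : Subgroup Γ) : Prop :=
  Nonempty (SingularityWitness Λ)


open HNNExtension HNNExtension.NormalWord

namespace HNNSingular

section Words

variable {G : Type} [Group G] {A B : Subgroup G} (φ : A ≃* B)


def tpow (u : ℤˣ) : HNNExtension G A B φ := t ^ (u : ℤ)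

theorem tpow_neg (u : ℤˣ) : tpow φ (-u) = (tpow φ u)⁻¹ := by
  simp [tpow, zpow_neg]

theorem tpow_mul_of_mem (u : ℤˣ) (a : toSubgroup A B u) :
    tpow φ u * of (a : G) = of ((toSubgroupEquiv φ u a : toSubgroup A B (-u)) : G) * tpow φ u := by
  rcases Int.units_eq_one_or u with rfl | rfl
  · have := t_mul_of (φ := φ) a
    simp [tpow] at this ⊢
    exact this
  · have := inv_t_mul_of (φ := φ) a
    simp [tpow] at this ⊢
    exact this

theorem prod_def (w : ReducedWord G A B) :
    ReducedWord.prod φ w = of w.head *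
      (w.toList.map (fun x => t ^ (x.1 : ℤ) * of x.2)).prod := rfl

theorem prod_mk_cons (h : G) (p : ℤˣ × G) (l : List (ℤˣ × G))
    (ch : (p :: l).IsChain (fun a b => a.2 ∈ toSubgroup A B a.1 → a.1 = b.1)) :
    ReducedWord.prod φ ⟨h, p::l, ch⟩ =
      of h * (tpow φ p.1 * ReducedWord.prod φ ⟨p.2, l, ch.tail⟩) := by
  simp [prod_def, tpow, mul_assoc]

theorem prod_mk_nil (h : G) (ch) :
    ReducedWord.prod φ (⟨h, [], ch⟩ : ReducedWord G A B) = of h := by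
  simp [prod_def]

/-- The shadow of the base edge in direction `u`. -/
def Sset (u : ℤˣ) : Set (HNNExtension G A B φ) :=
  {x | ∃ w : ReducedWord G A B, ReducedWord.prod φ w = x ∧
    w.head ∈ toSubgroup A B (-u) ∧ (w.toList.map Prod.fst).head? = some u}

theorem sset_spec {u : ℤˣ} {x : HNNExtension G A B φ} (hx : x ∈ Sset φ u)
    (w : ReducedWord G A B) (hw : ReducedWord.prod φ w = x) :
    w.head ∈ toSubgroup A B (-u) ∧ (w.toList.map Prod.fst).head? = some u := by
  obtain ⟨v, hv, hvh, hvl⟩ := hx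
  have h := ReducedWord.map_fst_eq_and_of_prod_eq φ (hv.trans hw.symm)
  have hmem : u ∈ Option.map Prod.fst v.toList.head? := by
    rw [← List.head?_map, hvl]; rfl
  have h2 := h.2 u hmem
  refine ⟨?_, ?_⟩
  · have : w.head = v.head * (v.head⁻¹ * w.head) := by group
    rw [this]; exact mul_mem hvh h2
  · rw [← h.1, hvl]

theorem not_mem_range_of_mem_sset {u : ℤˣ} {x : HNNExtension G A B φ}
    (hx : x ∈ Sset φ u) : x ∉ (of.range : Subgroup (HNNExtension G A B φ)) := by
  intro hr
  obtain ⟨w, hw, hh, hl⟩ := hx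
  have := ReducedWord.toList_eq_nil_of_mem_of_range φ w (hw ▸ hr)
  rw [this] at hl
  simp at hl

theorem exists_word (x : HNNExtension G A B φ) :
    ∃ w : ReducedWord G A B, ReducedWord.prod φ w = x := by
  rcases TransversalPair.nonempty G A B with ⟨d⟩
  exact ⟨(NormalWord.equiv φ d x).toReducedWord, (NormalWord.equiv φ d).symm_apply_apply x⟩


/-- Two distinct signs in `ℤˣ`. -/
theorem units_neg_of_ne {u v : ℤˣ} (h : u ≠ v) : u = -v := by
  rcases Int.units_eq_one_or u with rfl | rfl <;>
    rcases Int.units_eq_one_or v with rfl | rfl <;> simp_all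

theorem units_ne_neg_self (u : ℤˣ) : u ≠ -u := by
  rcases Int.units_eq_one_or u with rfl | rfl <;> decide

theorem append_syllable (w : ReducedWord G A B) (u : ℤˣ) (k : G)
    (hlast : ∀ p ∈ w.toList.getLast?, p.2 ∈ toSubgroup A B p.1 → p.1 = u) :
    ∃ w' : ReducedWord G A B,
      ReducedWord.prod φ w' = ReducedWord.prod φ w * tpow φ u * of k ∧
      w'.head = w.head ∧ w'.toList = w.toList ++ [(u, k)] := by
  refine ⟨⟨w.head, w.toList ++ [(u, k)], ?_⟩, ?_, rfl, rfl⟩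
  · refine List.IsChain.append w.chain (List.isChain_singleton _) ?_
    rintro x hx y hy
    simp only [List.head?_cons, Option.mem_some_iff] at hy
    subst hy
    exact hlast x hx
  · simp [prod_def, tpow, mul_assoc]

theorem exists_inv_word : ∀ (l : List (ℤˣ × G)) (h : G)
    (ch : l.IsChain (fun a b => a.2 ∈ toSubgroup A B a.1 → a.1 = b.1)),
    ∃ v : ReducedWord G A B,
      ReducedWord.prod φ v = (ReducedWord.prod φ ⟨h, l, ch⟩)⁻¹ ∧
      (l = [] → v.toList = []) ∧
      (∀ p : ℤˣ × G, l.head? = some p → v.toList.getLast? = some (-p.1, h⁻¹)) := by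
  intro l
  induction l with
  | nil =>
    intro h ch
    exact ⟨⟨h⁻¹, [], List.isChain_nil⟩, by simp [prod_def], fun _ => rfl, by simp⟩
  | cons p l' IH =>
    intro h ch
    obtain ⟨v', hv'prod, hv'nil, hv'last⟩ := IH p.2 ch.tail
    have hlast : ∀ q ∈ v'.toList.getLast?, q.2 ∈ toSubgroup A B q.1 → q.1 = -p.1 := by
      intro q hq hqmem
      match hl' : l' with
      | [] => rw [hv'nil rfl] at hq; simp at hq
      | r :: l'' =>
        rw [hv'last r rfl] at hq
        simp only [Option.mem_some_iff] at hq
        subst hq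
        simp only at hqmem
        -- hqmem : p.2⁻¹ ∈ toSubgroup A B (-r.1)
        have hp2 : p.2 ∈ toSubgroup A B (-r.1) := by
          simpa using inv_mem hqmem
        by_contra hne
        have h1 : -r.1 = p.1 := by simpa using units_neg_of_ne hne
        have hch : p.2 ∈ toSubgroup A B p.1 → p.1 = r.1 := (List.isChain_cons_cons.1 ch).1
        have : p.1 = r.1 := hch (h1 ▸ hp2)
        rw [← this] at h1
        exact units_ne_neg_self p.1 h1.symm
    obtain ⟨w', hw'prod, hw'head, hw'list⟩ := append_syllable φ v' (-p.1) h⁻¹ hlast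
    refine ⟨w', ?_, ?_, ?_⟩
    · rw [hw'prod, hv'prod, prod_mk_cons, tpow_neg]
      simp [mul_assoc]
    · simp
    · intro q hq
      simp only [List.head?_cons, Option.some_inj] at hq
      subst hq
      rw [hw'list, List.getLast?_concat]


open Pointwise

theorem of_mul_prod (k : G) (w : ReducedWord G A B) :
    of k * ReducedWord.prod φ w = ReducedWord.prod φ ⟨k * w.head, w.toList, w.chain⟩ := by
  simp [prod_def, mul_assoc]

theorem sign_eq_of_mul_mem {u u' : ℤˣ} {x : HNNExtension G A B φ} (hx : x ∈ Sset φ u) {k : G}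
    (hkx : of k * x ∈ Sset φ u') : u = u' := by
  obtain ⟨w, hw, hh, hl⟩ := hx
  have h2 := sset_spec φ hkx ⟨k * w.head, w.toList, w.chain⟩ (by rw [← of_mul_prod, hw])
  exact Option.some_inj.mp (hl.symm.trans h2.2)

theorem mem_of_mul_mem {u : ℤˣ} {x : HNNExtension G A B φ} (hx : x ∈ Sset φ u) {k : G}
    (hkx : of k * x ∈ Sset φ u) : k ∈ toSubgroup A B (-u) := by
  obtain ⟨w, hw, hh, hl⟩ := hx
  have h2 := sset_spec φ hkx ⟨k * w.head, w.toList, w.chain⟩ (by rw [← of_mul_prod, hw])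
  have hk : k = (k * w.head) * w.head⁻¹ := by group
  rw [hk]
  exact mul_mem h2.1 (inv_mem hh)

theorem tpow_smul_not_mem {u : ℤˣ} {x : HNNExtension G A B φ} (hx : x ∈ Sset φ (-u)) :
    tpow φ u * x ∉ Sset φ u := by
  intro hmem
  obtain ⟨⟨wh, wl, wch⟩, hw, hh, hl⟩ := hx
  simp only at hh hl
  rw [neg_neg] at hh
  cases wl with
  | nil => simp at hl
  | cons p l =>
    simp only [List.map_cons, List.head?_cons, Option.some_inj] at hl
    -- hl : p.1 = -u
    have hx2 : tpow φ u * ReducedWord.prod φ ⟨wh, p::l, wch⟩ =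
        of ((toSubgroupEquiv φ u ⟨wh, hh⟩ : toSubgroup A B (-u)) : G) *
          ReducedWord.prod φ ⟨p.2, l, wch.tail⟩ := by
      rw [prod_mk_cons, ← mul_assoc, tpow_mul_of_mem φ u ⟨wh, hh⟩, hl, tpow_neg]
      group
    rw [← hw] at hmem
    rw [hx2, of_mul_prod] at hmem
    cases l with
    | nil =>
      refine not_mem_range_of_mem_sset φ hmem ?_
      rw [prod_mk_nil]
      exact ⟨_, rfl⟩
    | cons q l₂ =>
      have hspec := sset_spec φ hmem _ rfl
      simp only [List.map_cons, List.head?_cons, Option.some_inj] at hspec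
      -- hspec.1 : c * p.2 ∈ toSubgroup A B (-u), hspec.2 : q.1 = u
      have hc : ((toSubgroupEquiv φ u ⟨wh, hh⟩ : toSubgroup A B (-u)) : G) ∈
          toSubgroup A B (-u) := SetLike.coe_mem _
      have hp2 : p.2 ∈ toSubgroup A B (-u) := by
        have : p.2 = ((toSubgroupEquiv φ u ⟨wh, hh⟩ : toSubgroup A B (-u)) : G)⁻¹ *
            (((toSubgroupEquiv φ u ⟨wh, hh⟩ : toSubgroup A B (-u)) : G) * p.2) := by group
        rw [this]
        exact mul_mem (inv_mem hc) hspec.1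
      have hrel : p.2 ∈ toSubgroup A B p.1 → p.1 = q.1 := (List.isChain_cons_cons.1 wch).1
      have : p.1 = q.1 := hrel (by rw [hl]; exact hp2)
      rw [hspec.2, hl] at this
      exact units_ne_neg_self u this.symm

theorem mem_or_tpow_mem (u : ℤˣ) (x : HNNExtension G A B φ) :
    x ∈ Sset φ u ∨ tpow φ (-u) * x ∈ Sset φ (-u) := by
  obtain ⟨⟨wh, wl, wch⟩, hw⟩ := exists_word φ x
  cases wl with
  | nil =>
    right
    refine ⟨⟨1, [(-u, wh)], List.isChain_singleton _⟩, ?_, ?_, by simp⟩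
    · rw [← hw, prod_mk_nil]
      simp [prod_def, tpow]
    · simpa using one_mem (toSubgroup A B u)
  | cons p l =>
    by_cases hc : p.1 = u ∧ wh ∈ toSubgroup A B (-u)
    · left
      exact ⟨⟨wh, p::l, wch⟩, hw, hc.2, by simp [hc.1]⟩
    · right
      have hlink : wh ∈ toSubgroup A B (-u) → -u = p.1 := by
        intro hwh
        rcases not_and_or.mp hc with hne | hne
        · exact (units_neg_of_ne fun hh => hne hh).symm
        · exact absurd hwh hne
      refine ⟨⟨1, (-u, wh)::p::l, List.isChain_cons_cons.2 ⟨hlink, wch⟩⟩, ?_, ?_, by simp⟩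
      · rw [prod_mk_cons, ← hw]
        simp [tpow]
      · simpa using one_mem (toSubgroup A B u)

theorem compl_sset (u : ℤˣ) :
    (Sset φ u)ᶜ = tpow φ u • Sset φ (-u) := by
  ext x
  simp only [Set.mem_compl_iff, Set.mem_smul_set]
  constructor
  · intro hx
    rcases mem_or_tpow_mem φ u x with h | h
    · exact absurd h hx
    · exact ⟨_, h, by rw [smul_eq_mul, tpow_neg]; group⟩
  · rintro ⟨y, hy, rfl⟩
    rw [smul_eq_mul]
    exact tpow_smul_not_mem φ hy

theorem exists_first_shadow {x : HNNExtension G A B φ}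
    (hx : x ∉ (of.range : Subgroup (HNNExtension G A B φ))) :
    ∃ (h : G) (u : ℤˣ), x ∈ (of h : HNNExtension G A B φ) • Sset φ u := by
  obtain ⟨⟨wh, wl, wch⟩, hw⟩ := exists_word φ x
  cases wl with
  | nil => exact absurd ⟨wh, by rw [← hw, prod_mk_nil]⟩ hx
  | cons p l =>
    refine ⟨wh, p.1, ReducedWord.prod φ ⟨1, p::l, wch⟩,
      ⟨⟨1, p::l, wch⟩, rfl, one_mem _, by simp⟩, ?_⟩
    show (of wh : HNNExtension G A B φ) * ReducedWord.prod φ ⟨1, p::l, wch⟩ = x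
    rw [of_mul_prod]
    simpa using hw

theorem nopinch {p q : ℤˣ × G} (hch : p.2 ∈ toSubgroup A B p.1 → p.1 = q.1)
    (hmem : p.2⁻¹ ∈ toSubgroup A B (-q.1)) : -q.1 = -p.1 := by
  have hp2 : p.2 ∈ toSubgroup A B (-q.1) := by simpa using inv_mem hmem
  by_contra hne
  have h1 : -q.1 = p.1 := by simpa using units_neg_of_ne hne
  have h2 : p.1 = q.1 := hch (h1 ▸ hp2)
  rw [← h2] at h1
  exact units_ne_neg_self p.1 h1.symm

theorem disjoint_cosets {u : ℤˣ} {a b : G} (hab : a⁻¹ * b ∉ toSubgroup A B (-u)) :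
    Disjoint ((of a : HNNExtension G A B φ) • Sset φ u)
      ((of b : HNNExtension G A B φ) • Sset φ u) := by
  rw [Set.disjoint_left]
  rintro x ⟨s, hs, rfl⟩ ⟨s', hs', heq⟩
  apply hab
  simp only [smul_eq_mul] at heq
  have hseq : of (a⁻¹ * b) * s' = s := by
    rw [map_mul]
    have : (of (a⁻¹) : HNNExtension G A B φ) = (of a)⁻¹ := by simp
    rw [this, mul_assoc, heq]
    group
  rw [← hseq] at hs
  exact mem_of_mul_mem φ hs' hs


theorem inv_mem_smul_iff {x : HNNExtension G A B φ} {u : ℤˣ} :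
    (1 : HNNExtension G A B φ) ∈ x • Sset φ u ↔ x⁻¹ ∈ Sset φ u := by
  simp only [Set.mem_smul_set, smul_eq_mul]
  constructor
  · rintro ⟨z, hz, hz1⟩
    have : z = x⁻¹ * (x * z) := by group
    rw [this, hz1, mul_one] at hz
    exact hz
  · intro h
    exact ⟨x⁻¹, h, by group⟩

theorem finish_step (h : G) (p1 : ℤˣ) (y : HNNExtension G A B φ) (u : ℤˣ)
    (key : ∀ z ∈ Sset φ u, y * z ∉ Sset φ (-p1)) :
    ((of h : HNNExtension G A B φ) * (tpow φ p1 * y)) • Sset φ u ⊆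
      (of h : HNNExtension G A B φ) • Sset φ p1 := by
  rintro a ⟨z, hz, rfl⟩
  have h1 : y * z ∈ (Sset φ (-p1))ᶜ := key z hz
  rw [compl_sset, neg_neg] at h1
  obtain ⟨s, hs, hsy⟩ := h1
  have hsy' : tpow φ (-p1) * s = y * z := hsy
  refine ⟨s, hs, ?_⟩
  show (of h : HNNExtension G A B φ) * s = (of h * (tpow φ p1 * y)) * z
  calc (of h : HNNExtension G A B φ) * s
      = of h * (tpow φ p1 * (tpow φ (-p1) * s)) := by rw [tpow_neg]; group
    _ = of h * (tpow φ p1 * (y * z)) := by rw [hsy']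
    _ = of h * (tpow φ p1 * y) * z := by group

theorem case_yes (h : G) (p : ℤˣ × G) (l' : List (ℤˣ × G))
    (ch : (p :: l').IsChain (fun a b => a.2 ∈ toSubgroup A B a.1 → a.1 = b.1)) (u : ℤˣ)
    (hyinv : (ReducedWord.prod φ ⟨p.2, l', ch.tail⟩)⁻¹ ∈ Sset φ u) :
    (ReducedWord.prod φ ⟨h, p::l', ch⟩)⁻¹ ∈ Sset φ u := by
  obtain ⟨v, hvprod, hvnil, hvlast⟩ := exists_inv_word φ l' p.2 ch.tail
  have hspec := sset_spec φ hyinv v hvprod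
  cases l' with
  | nil =>
    exfalso
    refine not_mem_range_of_mem_sset φ hyinv ?_
    erw [prod_mk_nil]
    exact inv_mem ⟨p.2, rfl⟩
  | cons q l'' =>
    have hlast : ∀ r ∈ v.toList.getLast?, r.2 ∈ toSubgroup A B r.1 → r.1 = -p.1 := by
      intro r hr hrmem
      rw [hvlast q rfl] at hr
      simp only [Option.mem_some_iff] at hr
      subst hr
      exact nopinch (List.isChain_cons_cons.1 ch).1 hrmem
    obtain ⟨w₂, hw₂prod, hw₂head, hw₂list⟩ := append_syllable φ v (-p.1) h⁻¹ hlast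
    obtain ⟨r0, rl, hrl⟩ : ∃ r0 rl, v.toList = r0 :: rl := by
      cases hvl : v.toList with
      | nil => rw [hvl] at hspec; simp at hspec
      | cons r0 rl => exact ⟨r0, rl, rfl⟩
    refine ⟨w₂, ?_, ?_, ?_⟩
    · rw [hw₂prod, hvprod, tpow_neg, prod_mk_cons φ h p (q::l'') ch, map_inv]
      group
    · rw [hw₂head]; exact hspec.1
    · rw [hw₂list, hrl]
      rw [hrl] at hspec
      simpa using hspec.2

theorem main_aux : ∀ (l : List (ℤˣ × G)) (h : G)
    (ch : l.IsChain (fun a b => a.2 ∈ toSubgroup A B a.1 → a.1 = b.1)) (u : ℤˣ),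
    (1 : HNNExtension G A B φ) ∉ ReducedWord.prod φ ⟨h, l, ch⟩ • Sset φ u →
    ReducedWord.prod φ ⟨h, l, ch⟩ • Sset φ u ⊆
      (of h : HNNExtension G A B φ) • Sset φ ((l.head?.map Prod.fst).getD u) := by
  intro l
  induction l with
  | nil =>
    intro h ch u _
    simp only [List.head?_nil, Option.map_none, Option.getD_none]
    rw [prod_mk_nil]
  | cons p l' IH =>
    intro h ch u hx1
    rw [prod_mk_cons] at hx1 ⊢
    simp only [List.head?_cons, Option.map_some, Option.getD_some]
    refine finish_step φ h p.1 _ u ?_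
    by_cases hyy : (1 : HNNExtension G A B φ) ∈
        ReducedWord.prod φ ⟨p.2, l', ch.tail⟩ • Sset φ u
    · exfalso
      apply hx1
      rw [inv_mem_smul_iff] at hyy ⊢
      rw [← prod_mk_cons]
      exact case_yes φ h p l' ch u hyy
    · intro z hz hmem
      cases l' with
      | nil =>
        apply hx1
        rw [inv_mem_smul_iff]
        erw [prod_mk_nil] at hmem
        have hu : u = -p.1 := sign_eq_of_mul_mem φ hz hmem
        subst hu
        have hp2 : p.2 ∈ toSubgroup A B p.1 := by
          have := mem_of_mul_mem φ hz hmem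
          rwa [neg_neg] at this
        refine ⟨⟨p.2⁻¹, [(-p.1, h⁻¹)], List.isChain_singleton _⟩, ?_, ?_, by simp⟩
        · rw [prod_mk_nil φ p.2 ch.tail] -- rewrite y
          simp only [prod_def, List.map_cons, List.map_nil, List.prod_cons, List.prod_nil]
          rw [map_inv, map_inv]
          simp only [tpow]
          rw [show ((-p.1 : ℤˣ) : ℤ) = -(p.1 : ℤ) by simp, zpow_neg]
          group
        · simpa [neg_neg] using inv_mem hp2
      | cons q l'' =>
        have hsub := IH p.2 ch.tail u hyy
        simp only [List.head?_cons, Option.map_some, Option.getD_some] at hsub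
        have hyz : ReducedWord.prod φ ⟨p.2, q::l'', ch.tail⟩ * z ∈
            (of p.2 : HNNExtension G A B φ) • Sset φ q.1 :=
          hsub ⟨z, hz, rfl⟩
        obtain ⟨s, hs, hseq⟩ := hyz
        have hseq' : (of p.2 : HNNExtension G A B φ) * s =
            ReducedWord.prod φ ⟨p.2, q::l'', ch.tail⟩ * z := hseq
        rw [← hseq'] at hmem
        have hq1 : q.1 = -p.1 := sign_eq_of_mul_mem φ hs hmem
        rw [hq1] at hs
        have hp2 : p.2 ∈ toSubgroup A B p.1 := by
          have := mem_of_mul_mem φ hs hmem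
          rwa [neg_neg] at this
        have := (List.isChain_cons_cons.1 ch).1 hp2
        rw [hq1] at this
        exact units_ne_neg_self p.1 this

theorem main_lemma (x : HNNExtension G A B φ) (u : ℤˣ)
    (hx : (1 : HNNExtension G A B φ) ∉ x • Sset φ u) :
    ∃ (h : G) (c : ℤˣ), x • Sset φ u ⊆ (of h : HNNExtension G A B φ) • Sset φ c := by
  obtain ⟨⟨wh, wl, wch⟩, rfl⟩ := exists_word φ x
  exact ⟨wh, _, main_aux φ wl wh wch u hx⟩


end Words


open MeasureTheory Pointwise

variable {K : Type} [Group K]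

/-- The embedding of `K` into the shift space recording membership in translated shadows. -/
noncomputable def iotaMap (S : ℤˣ → Set K) : K → (K × ℤˣ) → Bool :=
  fun d p => @decide (d ∈ p.1 • S p.2) (Classical.propDecidable _)

/-- The boundary space: closure of the image of `K`. -/
def XSet (S : ℤˣ → Set K) : Set ((K × ℤˣ) → Bool) := closure (Set.range (iotaMap S))

/-- The shift action of `K` on the product space. -/
def sigmaHomeo (γ : K) : ((K × ℤˣ) → Bool) ≃ₜ ((K × ℤˣ) → Bool) where
  toFun := fun f p => f (γ⁻¹ * p.1, p.2)
  invFun := fun f p => f (γ * p.1, p.2)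
  left_inv := fun f => by funext p; simp
  right_inv := fun f => by funext p; simp
  continuous_toFun := continuous_pi fun p => continuous_apply _
  continuous_invFun := continuous_pi fun p => continuous_apply _

theorem sigmaHomeo_apply (γ : K) (f : (K × ℤˣ) → Bool) (p : K × ℤˣ) :
    sigmaHomeo γ f p = f (γ⁻¹ * p.1, p.2) := rfl

theorem sigma_iota (S : ℤˣ → Set K) (γ d : K) :
    sigmaHomeo γ (iotaMap S d) = iotaMap S (γ * d) := by
  funext p
  rw [sigmaHomeo_apply]
  simp only [iotaMap]
  refine decide_eq_decide.mpr ?_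
  rw [Set.mem_smul_set_iff_inv_smul_mem, Set.mem_smul_set_iff_inv_smul_mem]
  simp [smul_eq_mul, mul_inv_rev, mul_assoc]

theorem sigma_mul (γ δ : K) (f : (K × ℤˣ) → Bool) :
    sigmaHomeo γ (sigmaHomeo δ f) = sigmaHomeo (γ * δ) f := by
  funext p
  simp [sigmaHomeo_apply, mul_assoc]

theorem sigma_one (f : (K × ℤˣ) → Bool) : sigmaHomeo (1 : K) f = f := by
  funext p
  simp [sigmaHomeo_apply]

theorem sigma_maps (S : ℤˣ → Set K) (γ : K) :
    sigmaHomeo γ '' XSet S = XSet S := by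
  have h1 : sigmaHomeo γ '' Set.range (iotaMap S) = Set.range (iotaMap S) := by
    rw [← Set.range_comp]
    have h2 : (⇑(sigmaHomeo γ) ∘ iotaMap S) = (iotaMap S) ∘ (fun d => γ * d) :=
      funext fun d => sigma_iota S γ d
    rw [h2]
    exact Function.Surjective.range_comp
      (fun x => ⟨γ⁻¹ * x, mul_inv_cancel_left γ x⟩) (iotaMap S)
  rw [XSet, Homeomorph.image_closure, h1]

theorem mem_XSet_sigma (S : ℤˣ → Set K) (γ : K) {f : (K × ℤˣ) → Bool} (hf : f ∈ XSet S) :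
    sigmaHomeo γ f ∈ XSet S := by
  rw [← sigma_maps S γ]
  exact ⟨f, hf, rfl⟩

/-- The induced action on the boundary space. -/
noncomputable def rhoHomeo (S : ℤˣ → Set K) (γ : K) : ↥(XSet S) ≃ₜ ↥(XSet S) where
  toFun := fun x => ⟨sigmaHomeo γ x.1, mem_XSet_sigma S γ x.2⟩
  invFun := fun x => ⟨sigmaHomeo γ⁻¹ x.1, mem_XSet_sigma S γ⁻¹ x.2⟩
  left_inv := fun x => Subtype.ext (show sigmaHomeo γ⁻¹ (sigmaHomeo γ x.1) = x.1 by
    rw [sigma_mul, inv_mul_cancel, sigma_one])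
  right_inv := fun x => Subtype.ext (show sigmaHomeo γ (sigmaHomeo γ⁻¹ x.1) = x.1 by
    rw [sigma_mul, mul_inv_cancel, sigma_one])
  continuous_toFun := Continuous.subtype_mk
    (((sigmaHomeo γ).continuous).comp continuous_subtype_val) _
  continuous_invFun := Continuous.subtype_mk
    (((sigmaHomeo γ⁻¹).continuous).comp continuous_subtype_val) _

theorem rhoHomeo_coe (S : ℤˣ → Set K) (γ : K) (x : ↥(XSet S)) :
    (rhoHomeo S γ x : (K × ℤˣ) → Bool) = sigmaHomeo γ x.1 := rfl


theorem singular_of_shadows [Countable K] (Λ₁ : Subgroup K)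
    (S : ℤˣ → Set K) (τ₀ : ℤˣ → K)
    (hS1 : ∀ (u : ℤˣ) (x : K), x ∈ S u → x ∉ Λ₁)
    (hdisj : ∀ u : ℤˣ, ∃ b : ℕ → K, (∀ i, b i ∈ Λ₁) ∧
      ∀ i j, i ≠ j → Disjoint (b i • S u) (b j • S u))
    (hcompl : ∀ u, (S u)ᶜ = τ₀ u • S (-u))
    (hmain : ∀ (x : K) (u : ℤˣ), (1 : K) ∉ x • S u →
      ∃ h ∈ Λ₁, ∃ c, x • S u ⊆ h • S c)
    (hsep : ∀ g : K, g ∉ Λ₁ → ∃ h ∈ Λ₁, ∃ c, g ∈ h • S c) :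
    IsSingularIn Λ₁ := by
  classical
  letI msI : MeasurableSpace ↥(XSet S) := borel _
  haveI bsI : BorelSpace ↥(XSet S) := ⟨rfl⟩
  haveI csI : CompactSpace ↥(XSet S) :=
    isCompact_iff_compactSpace.mp (IsClosed.isCompact isClosed_closure)
  have hpt_mem : iotaMap S 1 ∈ XSet S := subset_closure ⟨1, rfl⟩
  set pt : ↥(XSet S) := ⟨iotaMap S 1, hpt_mem⟩ with hpt_def
  have hiota_true : ∀ (d : K) (p : K × ℤˣ), iotaMap S d p = true ↔ d ∈ p.1 • S p.2 := by
    intro d p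
    simp [iotaMap]
  have hiota_false : ∀ (d : K) (p : K × ℤˣ), iotaMap S d p = false ↔ d ∉ p.1 • S p.2 := by
    intro d p
    simp [iotaMap]
  have hone_not : ∀ h ∈ Λ₁, ∀ c : ℤˣ, (1 : K) ∉ h • S c := by
    intro h hh c hmem
    rw [Set.mem_smul_set_iff_inv_smul_mem, smul_eq_mul, mul_one] at hmem
    exact hS1 c h⁻¹ hmem (inv_mem hh)
  have hpt_false : ∀ h ∈ Λ₁, ∀ c : ℤˣ, iotaMap S 1 (h, c) = false :=
    fun h hh c => (hiota_false 1 (h, c)).mpr (hone_not h hh c)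
  have htrans : ∀ (p q : K × ℤˣ) (a b : Bool),
      (∀ d : K, iotaMap S d p = a → iotaMap S d q = b) →
      ∀ x : ↥(XSet S), (x : (K × ℤˣ) → Bool) p = a → (x : (K × ℤˣ) → Bool) q = b := by
    intro p q a b hd x hxp
    have hcl : IsClosed {f : (K × ℤˣ) → Bool | f p = a → f q = b} := by
      have heq : {f : (K × ℤˣ) → Bool | f p = a → f q = b} =
          (fun f : (K × ℤˣ) → Bool => f p) ⁻¹' ({a}ᶜ) ∪
            (fun f : (K × ℤˣ) → Bool => f q) ⁻¹' {b} := by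
        ext f
        simp only [Set.mem_setOf_eq, Set.mem_union, Set.mem_preimage, Set.mem_compl_iff,
          Set.mem_singleton_iff]
        exact imp_iff_not_or
      rw [heq]
      exact IsClosed.union (IsClosed.preimage (continuous_apply p) (isClosed_discrete _))
        (IsClosed.preimage (continuous_apply q) (isClosed_discrete _))
    have hsub : Set.range (iotaMap S) ⊆ {f : (K × ℤˣ) → Bool | f p = a → f q = b} := by
      rintro f ⟨d, rfl⟩
      exact hd d
    exact closure_minimal hsub hcl x.2 hxp
  set E : (K × ℤˣ) → Set ↥(XSet S) :=
    fun p => {x : ↥(XSet S) | (x : (K × ℤˣ) → Bool) p = true} with hE_def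
  have hEmeas : ∀ p, MeasurableSet (E p) := by
    intro p
    have hcont : Continuous (fun x : ↥(XSet S) => (x : (K × ℤˣ) → Bool) p) :=
      (continuous_apply p).comp continuous_subtype_val
    exact hcont.measurable (measurableSet_singleton true)
  have hclaim : ∀ x : ↥(XSet S),
      (∀ h ∈ Λ₁, ∀ u : ℤˣ, (x : (K × ℤˣ) → Bool) (h, u) = false) →
      (x : (K × ℤˣ) → Bool) = iotaMap S 1 := by
    intro x hx
    funext p
    obtain ⟨g', u⟩ := p
    by_cases h1 : (1 : K) ∈ g' • S u
    · have hio : iotaMap S 1 (g', u) = true := (hiota_true _ _).mpr h1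
      rw [hio]
      have hcompl' : (g' • S u)ᶜ = (g' * τ₀ u) • S (-u) := by
        rw [← Set.smul_set_compl, hcompl, smul_smul]
      have h1' : (1 : K) ∉ (g' * τ₀ u) • S (-u) := by
        rw [← hcompl']
        simpa using h1
      obtain ⟨h, hh, c, hsub⟩ := hmain _ _ h1'
      refine htrans (h, c) (g', u) false true ?_ x (hx h hh c)
      intro d hd
      have hdn : d ∉ h • S c := (hiota_false _ _).mp hd
      have hd2 : d ∉ (g' • S u)ᶜ := fun hmem => hdn (hsub (hcompl' ▸ hmem))
      exact (hiota_true _ _).mpr (Set.not_notMem.mp hd2)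
    · have hio : iotaMap S 1 (g', u) = false := (hiota_false _ _).mpr h1
      rw [hio]
      obtain ⟨h, hh, c, hsub⟩ := hmain g' u h1
      have himp : (x : (K × ℤˣ) → Bool) (g', u) = true →
          (x : (K × ℤˣ) → Bool) (h, c) = true :=
        htrans (g', u) (h, c) true true
          (fun d hd => (hiota_true _ _).mpr (hsub ((hiota_true _ _).mp hd))) x
      cases hxv : (x : (K × ℤˣ) → Bool) (g', u) with
      | false => rfl
      | true =>
        have hcontra := himp hxv
        rw [hx h hh c] at hcontra
        simp at hcontra
  refine ⟨{
    X := ↥(XSet S)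
    ts := inferInstance
    ms := msI
    bs := bsI
    cs := csI
    t2 := inferInstance
    ne := ⟨pt⟩
    ρ := rhoHomeo S
    ρ_one := Homeomorph.ext (fun x => Subtype.ext (sigma_one x.1))
    ρ_mul := fun g h => Homeomorph.ext (fun x => Subtype.ext ((sigma_mul g h x.1).symm))
    singular := ?_ }⟩
  intro μ hprob _hreg hinv g hg
  haveI := hprob
  have hμc : ∀ h ∈ Λ₁, ∀ p : K × ℤˣ, μ (E (h * p.1, p.2)) = μ (E p) := by
    intro h hh p
    have hmeq : E (h * p.1, p.2) = (rhoHomeo S h⁻¹) ⁻¹' (E p) := by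
      rw [hE_def]
      ext x
      simp only [Set.mem_setOf_eq, Set.mem_preimage]
      have hv : (rhoHomeo S h⁻¹ x : (K × ℤˣ) → Bool) p
          = (x : (K × ℤˣ) → Bool) (h * p.1, p.2) := by
        rw [rhoHomeo_coe, sigmaHomeo_apply, inv_inv]
      rw [hv]
    have hmeasf : Measurable (rhoHomeo S h⁻¹ : ↥(XSet S) → ↥(XSet S)) :=
      (rhoHomeo S h⁻¹).continuous.measurable
    rw [hmeq, ← Measure.map_apply hmeasf (hEmeas p), hinv h⁻¹ (inv_mem hh)]
  have hzero1 : ∀ u : ℤˣ, μ (E (1, u)) = 0 := by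
    intro u
    obtain ⟨b, hbmem, hbdisj⟩ := hdisj u
    have hEb : ∀ i : ℕ, μ (E (b i, u)) = μ (E (1, u)) := fun i => by
      simpa using hμc (b i) (hbmem i) (1, u)
    have hdisjE : Pairwise (Function.onFun Disjoint (fun i : ℕ => E (b i, u))) := by
      intro i j hij
      have hdKi := Set.disjoint_left.mp (hbdisj i j hij)
      rw [Function.onFun, Set.disjoint_left]
      intro x hxi hxj
      have hximp : (x : (K × ℤˣ) → Bool) (b i, u) = true →
          (x : (K × ℤˣ) → Bool) (b j, u) = false :=
        htrans (b i, u) (b j, u) true false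
          (fun d hd => (hiota_false _ _).mpr fun hmem => hdKi ((hiota_true _ _).mp hd) hmem) x
      have hxi' : (x : (K × ℤˣ) → Bool) (b i, u) = true := hxi
      have hxj' : (x : (K × ℤˣ) → Bool) (b j, u) = true := hxj
      rw [hximp hxi'] at hxj'
      simp at hxj'
    have hsum := measure_iUnion (μ := μ) hdisjE (fun i : ℕ => hEmeas (b i, u))
    by_contra hm
    have h1 : ∑' (i : ℕ), μ (E (b i, u)) = ⊤ := by
      calc ∑' (i : ℕ), μ (E (b i, u)) = ∑' (_ : ℕ), μ (E (1, u)) := tsum_congr hEb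
        _ = ⊤ := ENNReal.tsum_const_eq_top_of_ne_zero hm
    have htop : (⊤ : ENNReal) ≤ μ Set.univ := by
      rw [← h1, ← hsum]
      exact measure_mono (Set.subset_univ _)
    rw [measure_univ] at htop
    exact absurd htop (by simp)
  have hzero : ∀ h ∈ Λ₁, ∀ u : ℤˣ, μ (E (h, u)) = 0 := by
    intro h hh u
    have := hμc h hh (1, u)
    simp only [mul_one] at this
    rw [this]
    exact hzero1 u
  have hNzero : μ ({pt}ᶜ) = 0 := by
    have hsub : ({pt}ᶜ : Set ↥(XSet S)) ⊆ ⋃ (h : ↥Λ₁) (u : ℤˣ), E ((h : K), u) := by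
      intro x hx
      by_contra hxn
      simp only [Set.mem_iUnion, not_exists] at hxn
      apply hx
      have hxf : ∀ h ∈ Λ₁, ∀ u : ℤˣ, (x : (K × ℤˣ) → Bool) (h, u) = false := by
        intro h hh u
        have hne : ¬ (x : (K × ℤˣ) → Bool) (h, u) = true := hxn ⟨h, hh⟩ u
        simpa using hne
      exact Set.mem_singleton_iff.mpr (Subtype.ext (hclaim x hxf))
    have hU : μ (⋃ (h : ↥Λ₁) (u : ℤˣ), E ((h : K), u)) = 0 :=
      measure_iUnion_null fun h => measure_iUnion_null fun u => hzero h h.2 u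
    exact le_antisymm (le_trans (measure_mono hsub) hU.le) (by positivity)
  have hq_ne : (rhoHomeo S g).symm pt ≠ pt := by
    intro hq
    have hfix : rhoHomeo S g pt = pt := by
      conv_lhs => rw [← hq]
      exact (rhoHomeo S g).apply_symm_apply pt
    have hval : sigmaHomeo g (iotaMap S 1) = iotaMap S 1 := congrArg Subtype.val hfix
    rw [sigma_iota, mul_one] at hval
    obtain ⟨h, hh, c, hgm⟩ := hsep g hg
    have h1 : iotaMap S g (h, c) = true := (hiota_true _ _).mpr hgm
    have h2 : iotaMap S 1 (h, c) = false := hpt_false h hh c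
    rw [hval] at h1
    rw [h1] at h2
    simp at h2
  have hmeas_pt : MeasurableSet ({pt} : Set ↥(XSet S)) := isClosed_singleton.measurableSet
  refine ⟨{pt}, hmeas_pt, ?_, hNzero⟩
  rw [Measure.map_apply (rhoHomeo S g).continuous.measurable hmeas_pt]
  have hpre : (rhoHomeo S g) ⁻¹' ({pt} : Set ↥(XSet S)) = {(rhoHomeo S g).symm pt} := by
    ext z
    simp only [Set.mem_preimage, Set.mem_singleton_iff]
    constructor
    · intro hz
      rw [← hz, Homeomorph.symm_apply_apply]
    · intro hz
      rw [hz, Homeomorph.apply_symm_apply]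
  rw [hpre]
  have hss : ({(rhoHomeo S g).symm pt} : Set ↥(XSet S)) ⊆ {pt}ᶜ := by
    intro z hz
    rw [Set.mem_singleton_iff] at hz
    rw [hz]
    simp only [Set.mem_compl_iff, Set.mem_singleton_iff]
    exact hq_ne
  exact le_antisymm (le_trans (measure_mono hss) hNzero.le) (by positivity)


theorem exists_coset_reps {Λ : Type} [Group Λ] (Kk : Subgroup Λ) (hinf : Infinite (Λ ⧸ Kk)) :
    ∃ b : ℕ → Λ, ∀ i j, i ≠ j → (b i)⁻¹ * b j ∉ Kk := by
  haveI := hinf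
  refine ⟨fun i => (Infinite.natEmbedding (Λ ⧸ Kk) i).out, ?_⟩
  intro i j hij hmem
  apply hij
  apply (Infinite.natEmbedding (Λ ⧸ Kk)).injective
  rw [← QuotientGroup.out_eq' (Infinite.natEmbedding (Λ ⧸ Kk) i),
      ← QuotientGroup.out_eq' (Infinite.natEmbedding (Λ ⧸ Kk) j)]
  exact QuotientGroup.eq.mpr hmem

end HNNSingular

open HNNSingular Pointwise in
/-- Let `Γ = HNN(Λ, Λ₀, θ)` be the HNN extension of `Λ` along an injective
homomorphism `θ : Λ₀ → Λ`: `Γ` is generated by (an injective copy of) `Λ` and a stable letter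
`τ` subject to `τ⁻¹ g τ = θ g` for `g ∈ Λ₀`, as expressed by the universal property below.
If both `Λ₀` and `θ Λ₀` have infinite index in `Λ`, then the image of `Λ` in `Γ` is singular
in `Γ`. -/
theorem isSingularIn_of_hnn_extension
    {Λ Γ : Type} [Group Λ] [Group Γ] [Countable Λ] [Countable Γ]
    (Λ₀ : Subgroup Λ) (θ : Λ₀ →* Λ) (hθ : Function.Injective θ)
    (j : Λ →* Γ) (τ : Γ)
    (hrel : ∀ g : Λ₀, τ⁻¹ * j g * τ = j (θ g))
    (huniv : ∀ (G : Type) [Group G] (f : Λ →* G) (x : G),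
      (∀ g : Λ₀, x⁻¹ * f g * x = f (θ g)) →
      ∃! φ : Γ →* G, φ.comp j = f ∧ φ τ = x)
    (hj : Function.Injective j)
    (hindex₁ : Infinite (Λ ⧸ Λ₀)) (hindex₂ : Infinite (Λ ⧸ θ.range)) :
    IsSingularIn j.range := by
  classical
  set φ0 : ↥θ.range ≃* ↥Λ₀ := (MonoidHom.ofInjective hθ).symm with hφ0
  have hcoe : ∀ a : ↥θ.range, (a : Λ) = θ (φ0 a) := by
    intro a
    conv_lhs => rw [← (MonoidHom.ofInjective hθ).apply_symm_apply a]
    rfl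
  have hofrel : ∀ g : ↥Λ₀,
      (HNNExtension.t : HNNExtension Λ θ.range Λ₀ φ0)⁻¹ * HNNExtension.of (g : Λ) *
        HNNExtension.t = HNNExtension.of (θ g) := by
    intro g
    have h1 := HNNExtension.equiv_eq_conj (φ := φ0) (MonoidHom.ofInjective hθ g)
    rw [show (φ0 (MonoidHom.ofInjective hθ g)) = g from
      (MonoidHom.ofInjective hθ).symm_apply_apply g] at h1
    rw [show ((MonoidHom.ofInjective hθ g : θ.range) : Λ) = θ g from rfl] at h1
    rw [h1]
    group
  obtain ⟨Φ, ⟨hΦj, hΦτ⟩, hΦuniq⟩ :=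
    huniv (HNNExtension Λ θ.range Λ₀ φ0) HNNExtension.of HNNExtension.t hofrel
  have hψrel : ∀ a : ↥θ.range, τ * j (a : Λ) = j ((φ0 a : Λ₀) : Λ) * τ := by
    intro a
    have h2 := hrel (φ0 a)
    rw [← hcoe a] at h2
    rw [← h2]
    group
  set ψ : HNNExtension Λ θ.range Λ₀ φ0 →* Γ := HNNExtension.lift j τ hψrel with hψdef
  have hψof : ∀ a : Λ, ψ (HNNExtension.of a) = j a := fun a => HNNExtension.lift_of j τ hψrel a
  have hψt : ψ HNNExtension.t = τ := HNNExtension.lift_t j τ hψrel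
  have hΦj' : ∀ a : Λ, Φ (j a) = HNNExtension.of a := fun a => DFunLike.congr_fun hΦj a
  obtain ⟨Ψ', hΨ'c, hΨ'uniq⟩ := huniv Γ j τ hrel
  have hcomp1 : ψ.comp Φ = MonoidHom.id Γ := by
    have e1 : ψ.comp Φ = Ψ' := hΨ'uniq _ ⟨by ext a; simp [hΦj', hψof], by
      simp only [MonoidHom.comp_apply, hΦτ, hψt]⟩
    have e2 : MonoidHom.id Γ = Ψ' := hΨ'uniq _ ⟨by ext a; rfl, rfl⟩
    rw [e1, ← e2]
  have hψΦ : ∀ x, ψ (Φ x) = x := fun x => DFunLike.congr_fun hcomp1 x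
  have hcomp2 : Φ.comp ψ = MonoidHom.id (HNNExtension Λ θ.range Λ₀ φ0) :=
    HNNExtension.hom_ext (by ext a; simp [hΦj', hψof]) (by
      simp only [MonoidHom.comp_apply, hψt, hΦτ]; rfl)
  have hΦψ : ∀ x, Φ (ψ x) = x := fun x => DFunLike.congr_fun hcomp2 x
  have hrange : ∀ x : Γ, x ∈ j.range ↔ Φ x ∈
      (HNNExtension.of : Λ →* HNNExtension Λ θ.range Λ₀ φ0).range := by
    intro x
    constructor
    · rintro ⟨a, rfl⟩
      exact ⟨a, (hΦj' a).symm⟩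
    · rintro ⟨a, ha⟩
      refine ⟨a, ?_⟩
      have := congrArg ψ ha
      rw [hψof, hψΦ] at this
      exact this
  have hpre_smul : ∀ (k : Γ) (T : Set (HNNExtension Λ θ.range Λ₀ φ0)),
      k • (Φ ⁻¹' T) = Φ ⁻¹' ((Φ k) • T) := by
    intro k T
    ext x
    rw [Set.mem_smul_set_iff_inv_smul_mem, Set.mem_preimage, Set.mem_preimage,
      Set.mem_smul_set_iff_inv_smul_mem, smul_eq_mul, smul_eq_mul, map_mul, map_inv]
  refine singular_of_shadows j.range (fun u => Φ ⁻¹' (Sset φ0 u))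
    (fun u => ψ (tpow φ0 u)) ?_ ?_ ?_ ?_ ?_
  · intro u x hx hxr
    exact not_mem_range_of_mem_sset φ0 hx ((hrange x).mp hxr)
  · intro u
    have hinf : Infinite (Λ ⧸ (HNNExtension.toSubgroup θ.range Λ₀ (-u))) := by
      rcases Int.units_eq_one_or u with rfl | rfl
      · rw [HNNExtension.toSubgroup_neg_one]
        exact hindex₁
      · rw [neg_neg, HNNExtension.toSubgroup_one]
        exact hindex₂
    obtain ⟨b, hb⟩ := exists_coset_reps _ hinf
    refine ⟨fun i => j (b i), fun i => ⟨b i, rfl⟩, ?_⟩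
    intro i i' hii'
    rw [hpre_smul, hpre_smul, hΦj', hΦj']
    exact Disjoint.preimage Φ (disjoint_cosets φ0 (hb i i' hii'))
  · intro u
    rw [← Set.preimage_compl, compl_sset, hpre_smul, hΦψ]
  · intro x u hx1
    have hx1' : (1 : HNNExtension Λ θ.range Λ₀ φ0) ∉ Φ x • Sset φ0 u := by
      intro hmem
      apply hx1
      rw [hpre_smul]
      show Φ 1 ∈ Φ x • Sset φ0 u
      rw [map_one]
      exact hmem
    obtain ⟨h, c, hsub⟩ := main_lemma φ0 (Φ x) u hx1'
    refine ⟨j h, ⟨h, rfl⟩, c, ?_⟩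
    rw [hpre_smul, hpre_smul, hΦj']
    exact Set.preimage_mono hsub
  · intro g hgΛ
    have hgr : Φ g ∉ (HNNExtension.of : Λ →* HNNExtension Λ θ.range Λ₀ φ0).range :=
      fun hm => hgΛ ((hrange g).mpr hm)
    obtain ⟨h, u, hmem⟩ := exists_first_shadow φ0 hgr
    refine ⟨j h, ⟨h, rfl⟩, u, ?_⟩
    rw [hpre_smul, hΦj']
    exact hmem
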